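/- Let D ≥ 1, let K and L be constant skew-symmetric real D×D matrices, let S : ℝ^D → ℝ be continuously differentiable, and let t₀ < t₁. Let Z : ℝ × ℝ → ℝ^D, written Z(t,x), be twice continuously differentiable and 1-periodic in x (Z(t, x+1) = Z(t, x) for all t, x). Suppose the scheme identity tested with ∂_t Z holds: ∫_{t₀}^{t₁} ∫₀¹ ( K ∂_t Z + L ∂_x Z − ∇S(Z) )·(∂_t Z) dx dt = 0. Then the discrete energy is conserved over the time interval: ∫₀¹ [ ½ Z·(L ∂_x Z) − S(Z) ](t₁, x) dx = ∫₀¹ [ ½ Z·(L ∂_x Z) − S(Z) ](t₀, x) dx. -/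

import Mathlib

open Matrix intervalIntegral MeasureTheory

/-- Gradient of `S : ℝ^D → ℝ`, componentwise via the Fréchet derivative. -/
noncomputable def grad {D : ℕ} (S : (Fin D → ℝ) → ℝ) (p : Fin D → ℝ) : Fin D → ℝ :=
  fun i => fderiv ℝ S p (Pi.single i 1)

/-- Partial derivative in the first (time) variable. -/
noncomputable def pt {E : Type*} [NormedAddCommGroup E] [NormedSpace ℝ E]
    (z : ℝ × ℝ → E) (p : ℝ × ℝ) : E :=
  deriv (fun s => z (s, p.2)) p.1

/-- Partial derivative in the second (space) variable. -/
noncomputable def px {E : Type*} [NormedAddCommGroup E] [NormedSpace ℝ E]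
    (z : ℝ × ℝ → E) (p : ℝ × ℝ) : E :=
  deriv (fun y => z (p.1, y)) p.2

section Aux

variable {D : ℕ}

lemma skew_dot {M : Matrix (Fin D) (Fin D) ℝ} (hM : Mᵀ = -M) (u v : Fin D → ℝ) :
    u ⬝ᵥ M.mulVec v = -(v ⬝ᵥ M.mulVec u) := by
  rw [Matrix.dotProduct_mulVec, ← Matrix.mulVec_transpose, hM, Matrix.neg_mulVec,
    neg_dotProduct, dotProduct_comm]

lemma skew_dot_self {M : Matrix (Fin D) (Fin D) ℝ} (hM : Mᵀ = -M) (v : Fin D → ℝ) :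
    v ⬝ᵥ M.mulVec v = 0 := by
  have := skew_dot hM v v; linarith

lemma grad_dot (S : (Fin D → ℝ) → ℝ) (p v : Fin D → ℝ) :
    grad S p ⬝ᵥ v = fderiv ℝ S p v := by
  conv_rhs => rw [pi_eq_sum_univ v, map_sum]
  unfold grad dotProduct
  congr 1; funext i
  rw [_root_.map_smul]
  have h1 : (fun j => if i = j then (1:ℝ) else 0) = Pi.single i 1 := by
    funext j; simp [Pi.single_apply, eq_comm]
  rw [h1]; simp [mul_comm]

lemma HasDerivAt.dotP {f g : ℝ → Fin D → ℝ} {f' g' : Fin D → ℝ} {x : ℝ}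
    (hf : HasDerivAt f f' x) (hg : HasDerivAt g g' x) :
    HasDerivAt (fun s => f s ⬝ᵥ g s) (f' ⬝ᵥ g x + f x ⬝ᵥ g') x := by
  have h : ∀ i : Fin D, HasDerivAt (fun s => f s i * g s i)
      (f' i * g x i + f x i * g' i) x := fun i => by
    have hfi : HasDerivAt (fun s => f s i) (f' i) x :=
      ((ContinuousLinearMap.proj i : (Fin D → ℝ) →L[ℝ] ℝ).hasFDerivAt.comp_hasDerivAt x hf)
    have hgi : HasDerivAt (fun s => g s i) (g' i) x :=
      ((ContinuousLinearMap.proj i : (Fin D → ℝ) →L[ℝ] ℝ).hasFDerivAt.comp_hasDerivAt x hg)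
    exact hfi.mul hgi
  have hsum : HasDerivAt (fun s => ∑ i : Fin D, f s i * g s i)
      (∑ i : Fin D, (f' i * g x i + f x i * g' i)) x :=
    HasDerivAt.fun_sum (fun i _ => h i)
  simpa [dotProduct, Finset.sum_add_distrib] using hsum

lemma Continuous.dotP {α : Type*} [TopologicalSpace α] {f g : α → Fin D → ℝ}
    (hf : Continuous f) (hg : Continuous g) : Continuous fun a => f a ⬝ᵥ g a := by
  unfold dotProduct
  exact continuous_finset_sum _ fun i _ =>
    ((continuous_apply i).comp hf).mul ((continuous_apply i).comp hg)

noncomputable def mulVecCLM (M : Matrix (Fin D) (Fin D) ℝ) : (Fin D → ℝ) →L[ℝ] (Fin D → ℝ) :=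
  (M.mulVecLin).toContinuousLinearMap

lemma mulVecCLM_apply (M : Matrix (Fin D) (Fin D) ℝ) (v : Fin D → ℝ) :
    mulVecCLM M v = M.mulVec v := rfl

/-- Slice derivative in the first variable. -/
lemma hasDerivAt_slice_t {E : Type*} [NormedAddCommGroup E] [NormedSpace ℝ E]
    {f : ℝ × ℝ → E} {t x : ℝ} (hf : DifferentiableAt ℝ f (t, x)) :
    HasDerivAt (fun s => f (s, x)) (fderiv ℝ f (t, x) (1, 0)) t :=
  hf.hasFDerivAt.comp_hasDerivAt t (HasDerivAt.prodMk (hasDerivAt_id t) (hasDerivAt_const t x))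

/-- Slice derivative in the second variable. -/
lemma hasDerivAt_slice_x {E : Type*} [NormedAddCommGroup E] [NormedSpace ℝ E]
    {f : ℝ × ℝ → E} {t x : ℝ} (hf : DifferentiableAt ℝ f (t, x)) :
    HasDerivAt (fun y => f (t, y)) (fderiv ℝ f (t, x) (0, 1)) x :=
  hf.hasFDerivAt.comp_hasDerivAt x (HasDerivAt.prodMk (hasDerivAt_const x t) (hasDerivAt_id x))

end Aux

/-- If the space-time finite element scheme tested with `∂_t Z` holds, then the
discrete energy `∫₀¹ (½ Z·(L ∂_x Z) − S(Z)) dx` is conserved from `t₀` to `t₁`. -/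
theorem discrete_energy_conservation
    (D : ℕ) (hD : 1 ≤ D)
    (K L : Matrix (Fin D) (Fin D) ℝ)
    (hK : Kᵀ = -K) (hL : Lᵀ = -L)
    (S : (Fin D → ℝ) → ℝ) (hS : ContDiff ℝ 1 S)
    (t₀ t₁ : ℝ) (ht : t₀ < t₁)
    (Z : ℝ × ℝ → Fin D → ℝ) (hZ : ContDiff ℝ 2 Z)
    (hper : ∀ t x : ℝ, Z (t, x + 1) = Z (t, x))
    (hscheme :
      (∫ t in t₀..t₁, ∫ x in (0:ℝ)..1,
        ((K.mulVec (pt Z (t, x)) + L.mulVec (px Z (t, x)) - grad S (Z (t, x)))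
          ⬝ᵥ pt Z (t, x))) = 0) :
    (∫ x in (0:ℝ)..1,
        ((1 / 2 : ℝ) * (Z (t₁, x) ⬝ᵥ L.mulVec (px Z (t₁, x))) - S (Z (t₁, x))))
      = ∫ x in (0:ℝ)..1,
          ((1 / 2 : ℝ) * (Z (t₀, x) ⬝ᵥ L.mulVec (px Z (t₀, x))) - S (Z (t₀, x))) := by
  -- basic differentiability
  have hZd : Differentiable ℝ Z := hZ.differentiable (by norm_num)
  have hZ' : ContDiff ℝ 1 (fderiv ℝ Z) := hZ.fderiv_right (by norm_num)
  have hZ'd : Differentiable ℝ (fderiv ℝ Z) := hZ'.differentiable one_ne_zero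
  have hSd : Differentiable ℝ S := hS.differentiable one_ne_zero
  -- the partial derivatives as fderiv applications
  set Zt : ℝ × ℝ → Fin D → ℝ := fun p => fderiv ℝ Z p (1, 0) with hZt_def
  set Zx : ℝ × ℝ → Fin D → ℝ := fun p => fderiv ℝ Z p (0, 1) with hZx_def
  set W : ℝ × ℝ → Fin D → ℝ := fun p => fderiv ℝ (fderiv ℝ Z) p (1, 0) (0, 1) with hW_def
  have hpt : ∀ p : ℝ × ℝ, pt Z p = Zt p := fun p =>
    (hasDerivAt_slice_t (hZd (p.1, p.2))).deriv
  have hpx : ∀ p : ℝ × ℝ, px Z p = Zx p := fun p =>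
    (hasDerivAt_slice_x (hZd (p.1, p.2))).deriv
  -- symmetry of second derivatives
  have hsym : ∀ p : ℝ × ℝ, fderiv ℝ (fderiv ℝ Z) p (0, 1) (1, 0) = W p := fun p =>
    second_derivative_symmetric (fun y => (hZd y).hasFDerivAt)
      (hZ'd p).hasFDerivAt (0, 1) (1, 0)
  -- time-slice derivatives
  have hZslt : ∀ t x : ℝ, HasDerivAt (fun s => Z (s, x)) (Zt (t, x)) t := fun t x =>
    hasDerivAt_slice_t (hZd (t, x))
  have hZslx : ∀ t x : ℝ, HasDerivAt (fun y => Z (t, y)) (Zx (t, x)) x := fun t x =>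
    hasDerivAt_slice_x (hZd (t, x))
  have hZxslt : ∀ t x : ℝ, HasDerivAt (fun s => Zx (s, x)) (W (t, x)) t := fun t x => by
    have h1 : HasDerivAt (fun s => fderiv ℝ Z (s, x))
        (fderiv ℝ (fderiv ℝ Z) (t, x) (1, 0)) t := hasDerivAt_slice_t (hZ'd (t, x))
    exact (ContinuousLinearMap.apply ℝ (Fin D → ℝ)
      ((0:ℝ), (1:ℝ))).hasFDerivAt.comp_hasDerivAt t h1
  have hZtslx : ∀ t x : ℝ, HasDerivAt (fun y => Zt (t, y)) (W (t, x)) x := fun t x => by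
    have h1 : HasDerivAt (fun y => fderiv ℝ Z (t, y))
        (fderiv ℝ (fderiv ℝ Z) (t, x) (0, 1)) x := hasDerivAt_slice_x (hZ'd (t, x))
    have h2 := (ContinuousLinearMap.apply ℝ (Fin D → ℝ)
      ((1:ℝ), (0:ℝ))).hasFDerivAt.comp_hasDerivAt x h1
    simpa [hsym (t, x), Function.comp_def] using h2
  -- energy density and flux and their partial derivatives
  set e : ℝ → ℝ → ℝ := fun t x =>
    (1 / 2 : ℝ) * (Z (t, x) ⬝ᵥ L.mulVec (Zx (t, x))) - S (Z (t, x)) with he_def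
  set et : ℝ → ℝ → ℝ := fun t x =>
    (1 / 2 : ℝ) * (Zt (t, x) ⬝ᵥ L.mulVec (Zx (t, x)) + Z (t, x) ⬝ᵥ L.mulVec (W (t, x)))
      - fderiv ℝ S (Z (t, x)) (Zt (t, x)) with het_def
  set g : ℝ → ℝ → ℝ := fun t x =>
    (1 / 2 : ℝ) * (Zt (t, x) ⬝ᵥ L.mulVec (Z (t, x))) with hg_def
  set gx : ℝ → ℝ → ℝ := fun t x =>
    (1 / 2 : ℝ) * (W (t, x) ⬝ᵥ L.mulVec (Z (t, x)) + Zt (t, x) ⬝ᵥ L.mulVec (Zx (t, x)))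
      with hgx_def
  have hedt : ∀ t x : ℝ, HasDerivAt (fun s => e s x) (et t x) t := fun t x => by
    have hd : HasDerivAt (fun s => Z (s, x) ⬝ᵥ L.mulVec (Zx (s, x)))
        (Zt (t, x) ⬝ᵥ L.mulVec (Zx (t, x)) + Z (t, x) ⬝ᵥ L.mulVec (W (t, x))) t := by
      have hmv : HasDerivAt (fun s => L.mulVec (Zx (s, x))) (L.mulVec (W (t, x))) t := by
        simpa [mulVecCLM_apply, Function.comp_def] using
          (mulVecCLM L).hasFDerivAt.comp_hasDerivAt t (hZxslt t x)
      exact (hZslt t x).dotP hmv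
    have hSc : HasDerivAt (fun s => S (Z (s, x)))
        (fderiv ℝ S (Z (t, x)) (Zt (t, x))) t :=
      (hSd (Z (t, x))).hasFDerivAt.comp_hasDerivAt t (hZslt t x)
    exact (hd.const_mul (1 / 2 : ℝ)).sub hSc
  have hgdx : ∀ t x : ℝ, HasDerivAt (fun y => g t y) (gx t x) x := fun t x => by
    have hmv : HasDerivAt (fun y => L.mulVec (Z (t, y))) (L.mulVec (Zx (t, x))) x := by
      simpa [mulVecCLM_apply, Function.comp_def] using
        (mulVecCLM L).hasFDerivAt.comp_hasDerivAt x (hZslx t x)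
    exact ((hZtslx t x).dotP hmv).const_mul (1 / 2 : ℝ)
  -- pointwise decomposition of the scheme integrand
  have hsplit : ∀ t x : ℝ,
      ((K.mulVec (pt Z (t, x)) + L.mulVec (px Z (t, x)) - grad S (Z (t, x)))
        ⬝ᵥ pt Z (t, x)) = et t x + gx t x := fun t x => by
    rw [hpt (t, x), hpx (t, x)]
    have h1 : (K.mulVec (Zt (t, x)) + L.mulVec (Zx (t, x)) - grad S (Z (t, x)))
        ⬝ᵥ Zt (t, x)
        = K.mulVec (Zt (t, x)) ⬝ᵥ Zt (t, x) + L.mulVec (Zx (t, x)) ⬝ᵥ Zt (t, x)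
          - grad S (Z (t, x)) ⬝ᵥ Zt (t, x) := by
      rw [sub_dotProduct, add_dotProduct]
    rw [h1, dotProduct_comm (K.mulVec (Zt (t, x))), skew_dot_self hK,
      dotProduct_comm (L.mulVec (Zx (t, x))), grad_dot]
    have h2 : W (t, x) ⬝ᵥ L.mulVec (Z (t, x)) = -(Z (t, x) ⬝ᵥ L.mulVec (W (t, x))) :=
      skew_dot hL _ _
    simp only [het_def, hgx_def, h2]
    ring
  -- continuity facts
  have hcZ : Continuous Z := hZ.continuous
  have hcZ' : Continuous (fderiv ℝ Z) := hZ'.continuous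
  have hcZ'' : Continuous (fderiv ℝ (fderiv ℝ Z)) := hZ'.continuous_fderiv one_ne_zero
  have hcZt : Continuous Zt := hcZ'.clm_apply continuous_const
  have hcZx : Continuous Zx := hcZ'.clm_apply continuous_const
  have hcW : Continuous W := (hcZ''.clm_apply continuous_const).clm_apply continuous_const
  have hcS' : Continuous (fderiv ℝ S) := hS.continuous_fderiv one_ne_zero
  have hcmul : ∀ f : ℝ × ℝ → Fin D → ℝ, Continuous f →
      Continuous (fun p => L.mulVec (f p)) := fun f hf => by
    simpa [mulVecCLM_apply, Function.comp_def] using (mulVecCLM L).continuous.comp hf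
  have hcet : Continuous (fun p : ℝ × ℝ => et p.1 p.2) := by
    simp only [het_def]
    exact (continuous_const.mul ((hcZt.dotP (hcmul _ hcZx)).add (hcZ.dotP (hcmul _ hcW)))).sub
      (((hcS'.comp hcZ).clm_apply hcZt))
  have hcgx : Continuous (fun p : ℝ × ℝ => gx p.1 p.2) := by
    simp only [hgx_def]
    exact continuous_const.mul ((hcW.dotP (hcmul _ hcZ)).add (hcZt.dotP (hcmul _ hcZx)))
  have hce : ∀ t : ℝ, Continuous (fun x : ℝ => e t x) := fun t => by
    simp only [he_def]
    have hc : Continuous (fun x : ℝ => ((t, x) : ℝ × ℝ)) :=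
      continuous_const.prodMk continuous_id
    exact (continuous_const.mul ((hcZ.comp hc).dotP ((hcmul _ hcZx).comp hc))).sub
      ((hS.continuous).comp (hcZ.comp hc))
  -- flux integral vanishes
  have hflux : ∀ t : ℝ, (∫ x in (0:ℝ)..1, gx t x) = 0 := fun t => by
    have hint : IntervalIntegrable (gx t) volume 0 1 :=
      (hcgx.comp (continuous_const.prodMk continuous_id)).intervalIntegrable 0 1
    have := intervalIntegral.integral_eq_sub_of_hasDerivAt
      (f := g t) (f' := gx t) (a := (0:ℝ)) (b := 1)
      (fun y _ => hgdx t y) hint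
    rw [this]
    -- periodicity: g t 1 = g t 0
    have hZper : Z (t, 1) = Z (t, 0) := by simpa using hper t 0
    have hZtper : Zt (t, 1) = Zt (t, 0) := by
      have h1 : (fun s => Z (s, (1:ℝ))) = fun s => Z (s, 0) := by
        funext s; simpa using hper s 0
      have := (hZslt t 1)
      rw [h1] at this
      exact this.unique (hZslt t 0)
    simp [hg_def, hZper, hZtper]
  -- the scheme gives ∫t ∫x et = 0
  have hetint : ∀ t : ℝ, IntervalIntegrable (et t) volume 0 1 := fun t =>
    (hcet.comp (continuous_const.prodMk continuous_id)).intervalIntegrable 0 1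
  have hgxint : ∀ t : ℝ, IntervalIntegrable (gx t) volume 0 1 := fun t =>
    (hcgx.comp (continuous_const.prodMk continuous_id)).intervalIntegrable 0 1
  have hstep1 : (∫ t in t₀..t₁, ∫ x in (0:ℝ)..1, et t x) = 0 := by
    have hcong : (∫ t in t₀..t₁, ∫ x in (0:ℝ)..1,
        ((K.mulVec (pt Z (t, x)) + L.mulVec (px Z (t, x)) - grad S (Z (t, x)))
          ⬝ᵥ pt Z (t, x)))
        = ∫ t in t₀..t₁, ∫ x in (0:ℝ)..1, et t x := by
      apply intervalIntegral.integral_congr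
      intro t _
      show (∫ x in (0:ℝ)..1,
          ((K.mulVec (pt Z (t, x)) + L.mulVec (px Z (t, x)) - grad S (Z (t, x)))
            ⬝ᵥ pt Z (t, x))) = ∫ x in (0:ℝ)..1, et t x
      rw [show (∫ x in (0:ℝ)..1,
          ((K.mulVec (pt Z (t, x)) + L.mulVec (px Z (t, x)) - grad S (Z (t, x)))
            ⬝ᵥ pt Z (t, x))) = ∫ x in (0:ℝ)..1, (et t x + gx t x) from
        intervalIntegral.integral_congr (fun x _ => hsplit t x)]
      rw [intervalIntegral.integral_add (hetint t) (hgxint t), hflux t, add_zero]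
    rw [← hcong]
    exact hscheme
  -- Fubini swap
  have hswap : (∫ t in t₀..t₁, ∫ x in (0:ℝ)..1, et t x)
      = ∫ x in (0:ℝ)..1, ∫ t in t₀..t₁, et t x := by
    simp_rw [intervalIntegral.integral_of_le (zero_le_one : (0:ℝ) ≤ 1),
      intervalIntegral.integral_of_le ht.le]
    apply MeasureTheory.integral_integral_swap
    have : IntegrableOn (fun p : ℝ × ℝ => et p.1 p.2)
        (Set.Ioc t₀ t₁ ×ˢ Set.Ioc (0:ℝ) 1) (volume.prod volume) := by
      apply (hcet.continuousOn.integrableOn_compact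
        (isCompact_Icc.prod isCompact_Icc : IsCompact (Set.Icc t₀ t₁ ×ˢ Set.Icc (0:ℝ) 1))).mono_set
      exact Set.prod_mono Set.Ioc_subset_Icc_self Set.Ioc_subset_Icc_self
    rw [Measure.prod_restrict]
    exact this
  -- FTC in time
  have hftc : ∀ x : ℝ, (∫ t in t₀..t₁, et t x) = e t₁ x - e t₀ x := fun x => by
    have hint : IntervalIntegrable (fun t => et t x) volume t₀ t₁ :=
      (hcet.comp (continuous_id.prodMk continuous_const)).intervalIntegrable t₀ t₁
    exact intervalIntegral.integral_eq_sub_of_hasDerivAt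
      (fun t _ => hedt t x) hint
  -- assemble
  have hfin : (∫ x in (0:ℝ)..1, (e t₁ x - e t₀ x)) = 0 := by
    have h2 : (∫ x in (0:ℝ)..1, ∫ t in t₀..t₁, et t x)
        = ∫ x in (0:ℝ)..1, (e t₁ x - e t₀ x) :=
      intervalIntegral.integral_congr (fun x _ => hftc x)
    rw [← h2, ← hswap]
    exact hstep1
  have hi1 : IntervalIntegrable (e t₁) volume 0 1 := (hce t₁).intervalIntegrable 0 1
  have hi0 : IntervalIntegrable (e t₀) volume 0 1 := (hce t₀).intervalIntegrable 0 1
  rw [intervalIntegral.integral_sub hi1 hi0] at hfin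
  have hgoal : ∀ t : ℝ, (∫ x in (0:ℝ)..1,
      ((1 / 2 : ℝ) * (Z (t, x) ⬝ᵥ L.mulVec (px Z (t, x))) - S (Z (t, x))))
      = ∫ x in (0:ℝ)..1, e t x := fun t =>
    intervalIntegral.integral_congr (fun x _ => by rw [hpx (t, x)])
  rw [hgoal t₁, hgoal t₀]
  linarith
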